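/- arXiv:1607.04604 — 6 statements merged into one kernel-verified Lean document; each statement's English description precedes it below -/
import Mathlib

section
/- For every natural number n and every positive natural number m, (sum over i from m to 2m-1 of floor((n+i)/(2m))) minus (sum over i from 0 to m-1 of floor((n+i)/(2m))) equals 2m * Zigzag(n/(2m)). -/
def Zigzag (x : ℚ) : ℚ := min (x - ⌊x⌋) (⌈x⌉ - x)

theorem sum_floor_diff_eq_zigzag (n m : ℕ) (hm : 0 < m) :
    ((∑ i ∈ Finset.Ico m (2 * m), ⌊((n : ℚ) + i) / (2 * m)⌋
      - ∑ i ∈ Finset.range m, ⌊((n : ℚ) + i) / (2 * m)⌋ : ℤ) : ℚ)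
      = 2 * m * Zigzag ((n : ℚ) / (2 * m)) := by
  set M := 2 * m with hM
  have hM0 : 0 < M := by omega
  set q := n / M with hq
  set r := n % M with hr
  have hn : n = M * q + r := by rw [hq, hr]; exact (Nat.div_add_mod n M).symm
  have hrM : r < M := Nat.mod_lt _ hM0
  have hMQ : ((M : ℚ)) = 2 * m := by rw [hM]; push_cast; ring
  have hMQ0 : (M : ℚ) ≠ 0 := by positivity
  -- each floor term
  have hterm : ∀ i : ℕ, i < M →
      ⌊((n : ℚ) + i) / (M : ℚ)⌋ = (q : ℤ) + (if M ≤ r + i then 1 else 0) := by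
    intro i hi
    have h1 : ((n : ℚ) + i) = ((n + i : ℕ) : ℚ) := by push_cast; ring
    have h2 : (n + i) / M = q + (if M ≤ r + i then 1 else 0) := by
      rw [hn, Nat.add_assoc, Nat.mul_add_div hM0]
      congr 1
      split
      · exact Nat.div_eq_of_lt_le (by omega) (by omega)
      · exact Nat.div_eq_of_lt (by omega)
    rw [h1, Rat.floor_natCast_div_natCast, ← Int.natCast_div, h2]
    split <;> push_cast <;> ring
  have hS2 : ∑ i ∈ Finset.Ico m M, ⌊((n : ℚ) + i) / (M : ℚ)⌋
      = m * q + ((Finset.Ico m M).filter (fun i => M ≤ r + i)).card := by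
    rw [Finset.sum_congr rfl (fun i hi => hterm i (Finset.mem_Ico.mp hi).2),
      Finset.sum_add_distrib, Finset.sum_const, Finset.sum_boole, Nat.card_Ico,
      show M - m = m from by omega]
    push_cast
    ring
  have hS1 : ∑ i ∈ Finset.range m, ⌊((n : ℚ) + i) / (M : ℚ)⌋
      = m * q + ((Finset.range m).filter (fun i => M ≤ r + i)).card := by
    rw [Finset.sum_congr rfl (fun i hi => hterm i (by
        have := Finset.mem_range.mp hi; omega)),
      Finset.sum_add_distrib, Finset.sum_const, Finset.sum_boole, Finset.card_range]
    push_cast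
    ring
  have hc2 : ((Finset.Ico m M).filter (fun i => M ≤ r + i)) = Finset.Ico (max m (M - r)) M := by
    ext i
    simp only [Finset.mem_filter, Finset.mem_Ico]
    omega
  have hc1 : ((Finset.range m).filter (fun i => M ≤ r + i)) = Finset.Ico (M - r) m := by
    ext i
    simp only [Finset.mem_filter, Finset.mem_range, Finset.mem_Ico]
    omega
  -- floor and ceil of n / M
  have hfl : ⌊(n : ℚ) / (M : ℚ)⌋ = (q : ℤ) := by
    rw [Rat.floor_natCast_div_natCast]
    exact (Int.natCast_div n M).symm
  have hcl : ⌈(n : ℚ) / (M : ℚ)⌉ = (q : ℤ) + (if r = 0 then 0 else 1) := by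
    by_cases h : r = 0
    · rw [if_pos h, add_zero]
      have : (n : ℚ) / (M : ℚ) = ((q : ℤ) : ℚ) := by
        rw [hn, h]
        push_cast
        field_simp
        ring
      rw [this, Int.ceil_intCast]
    · rw [if_neg h, Int.ceil_eq_iff]
      have h1 : (1 : ℚ) ≤ r := by exact_mod_cast Nat.one_le_iff_ne_zero.mpr h
      have h2 : (r : ℚ) < M := by exact_mod_cast hrM
      constructor
      · push_cast
        rw [lt_div_iff₀ (by positivity)]
        rw [hn]; push_cast; nlinarith
      · push_cast
        rw [div_le_iff₀ (by positivity)]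
        rw [hn]; push_cast; nlinarith
  -- compute RHS
  have hxx : (M : ℚ) * ((n : ℚ) / (M : ℚ)) = n := by field_simp
  have hRHS : (M : ℚ) * Zigzag ((n : ℚ) / (M : ℚ))
      = ((min (r : ℤ) ((M : ℤ) * ((q : ℤ) + (if r = 0 then 0 else 1)) - n) : ℤ) : ℚ) := by
    rw [Zigzag, mul_min_of_nonneg _ _ (by positivity : (0:ℚ) ≤ (M : ℚ)), hfl, hcl,
      mul_sub, mul_sub, hxx]
    by_cases h : r = 0
    · simp only [h, if_true, ite_true]
      rw [hn]; push_cast [h]; congr 1 <;> ring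
    · simp only [h, if_false, ite_false]
      rw [hn]; push_cast; congr 1 <;> ring
  have main : (∑ i ∈ Finset.Ico m M, ⌊((n : ℚ) + i) / (M : ℚ)⌋
      - ∑ i ∈ Finset.range m, ⌊((n : ℚ) + i) / (M : ℚ)⌋ : ℤ)
      = min (r : ℤ) ((M : ℤ) * ((q : ℤ) + (if r = 0 then 0 else 1)) - n) := by
    rw [hS2, hS1, hc2, hc1, Nat.card_Ico, Nat.card_Ico]
    have hnz : (n : ℤ) = (M : ℤ) * q + r := by exact_mod_cast hn
    have hM' : (M : ℤ) = 2 * m := by rw [hM]; push_cast; ring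
    have hexp : (M : ℤ) * ((q : ℤ) + 1) = (M : ℤ) * q + M := by ring
    by_cases h : r = 0
    · simp only [h, if_true, ite_true, add_zero, Nat.cast_zero, mul_add, mul_zero]
      omega
    · simp only [h, if_false, ite_false]
      rw [hexp]
      omega
  calc ((∑ i ∈ Finset.Ico m M, ⌊((n : ℚ) + i) / (2 * m : ℚ)⌋
      - ∑ i ∈ Finset.range m, ⌊((n : ℚ) + i) / (2 * m : ℚ)⌋ : ℤ) : ℚ)
      = ((∑ i ∈ Finset.Ico m M, ⌊((n : ℚ) + i) / (M : ℚ)⌋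
      - ∑ i ∈ Finset.range m, ⌊((n : ℚ) + i) / (M : ℚ)⌋ : ℤ) : ℚ) := by rw [hMQ]
    _ = ((min (r : ℤ) ((M : ℤ) * ((q : ℤ) + (if r = 0 then 0 else 1)) - n) : ℤ) : ℚ) := by
        rw [main]
    _ = (M : ℚ) * Zigzag ((n : ℚ) / (M : ℚ)) := hRHS.symm
    _ = 2 * m * Zigzag ((n : ℚ) / (2 * m)) := by rw [hMQ]
end

section
/- For every natural number n and every positive natural number m, the sum over i from 0 to m-1 of floor((n+i)/(2m)) equals n/2 - m * Zigzag(n/(2m)). -/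
theorem sum_floor_eq_half_sub_zigzag (n m : ℕ) (hm : 0 < m) :
    ((∑ i ∈ Finset.range m, ⌊((n : ℚ) + i) / (2 * m)⌋ : ℤ) : ℚ)
      = (n : ℚ) / 2 - m * Zigzag ((n : ℚ) / (2 * m)) := by
  obtain ⟨q, r, hr, rfl⟩ : ∃ q r, r < 2 * m ∧ n = 2 * m * q + r :=
    ⟨n / (2 * m), n % (2 * m), Nat.mod_lt _ (by omega), (Nat.div_add_mod n (2 * m)).symm⟩
  have hm' : (0 : ℚ) < 2 * m := by positivity
  -- compute each floor term
  have hfloor : ∀ i ∈ Finset.range m,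
      ⌊(((2 * m * q + r : ℕ) : ℚ) + i) / (2 * m)⌋
        = (q : ℤ) + if 2 * m ≤ r + i then 1 else 0 := by
    intro i hi
    simp only [Finset.mem_range] at hi
    have heq : (((2 * m * q + r : ℕ) : ℚ) + i) / (2 * m)
        = ((2 * m * q + (r + i) : ℕ) : ℚ) / ((2 * m : ℕ) : ℚ) := by push_cast; ring
    rw [heq, Rat.floor_natCast_div_natCast, ← Int.natCast_div, Nat.mul_add_div (by omega)]
    by_cases h : 2 * m ≤ r + i
    · rw [if_pos h, Nat.div_eq_of_lt_le (show 1 * (2 * m) ≤ r + i by omega) (by omega)]; push_cast; ring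
    · rw [if_neg h, Nat.div_eq_of_lt (by omega)]; push_cast; ring
  rw [Finset.sum_congr rfl hfloor, Finset.sum_add_distrib, Finset.sum_const,
    Finset.card_range, Finset.sum_boole]
  have hcard : (Finset.range m).filter (fun i => 2 * m ≤ r + i) = Finset.Ico (2 * m - r) m := by
    ext i; simp only [Finset.mem_filter, Finset.mem_range, Finset.mem_Ico]; omega
  rw [hcard, Nat.card_Ico]
  -- floor of x
  have hx : ((2 * m * q + r : ℕ) : ℚ) / (2 * m) = ((2 * m * q + r : ℕ) : ℚ) / ((2 * m : ℕ) : ℚ) := by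
    push_cast; ring
  have hfl : ⌊((2 * m * q + r : ℕ) : ℚ) / (2 * m)⌋ = (q : ℤ) := by
    rw [hx, Rat.floor_natCast_div_natCast, ← Int.natCast_div, Nat.mul_add_div (by omega),
      Nat.div_eq_of_lt hr, Nat.add_zero]
  have hxval : ((2 * m * q + r : ℕ) : ℚ) / (2 * m) = (q : ℚ) + (r : ℚ) / (2 * m) := by
    field_simp
    push_cast
    ring
  rcases Nat.eq_zero_or_pos r with hr0 | hr0
  · -- r = 0 : the point is an integer, Zigzag = 0
    subst hr0
    have hx0 : ((2 * m * q + 0 : ℕ) : ℚ) / (2 * m) = ((q : ℤ) : ℚ) := by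
      rw [hxval]; push_cast; ring
    have hz : Zigzag (((2 * m * q + 0 : ℕ) : ℚ) / (2 * m)) = 0 := by
      unfold Zigzag
      rw [hx0]
      simp
    rw [hz]
    have h3 : m - (2 * m - 0) = 0 := by omega
    rw [h3]
    push_cast
    ring_nf
    norm_cast
    ring
  · -- r > 0 : ceiling is q + 1
    have hcl : ⌈((2 * m * q + r : ℕ) : ℚ) / (2 * m)⌉ = (q : ℤ) + 1 := by
      rw [hxval, Int.ceil_eq_iff]
      constructor
      · push_cast
        have : (0 : ℚ) < (r : ℚ) / (2 * m) := by positivity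
        linarith
      · push_cast
        have : (r : ℚ) / (2 * m) ≤ 1 := by
          rw [div_le_one hm']; exact_mod_cast hr.le
        linarith
    by_cases hrm : r ≤ m
    · have key : (r : ℚ) / (2 * m) ≤ 1 / 2 := by
        rw [div_le_iff₀ hm']
        have : (r : ℚ) ≤ m := by exact_mod_cast hrm
        linarith
      have hz : Zigzag (((2 * m * q + r : ℕ) : ℚ) / (2 * m)) = (r : ℚ) / (2 * m) := by
        unfold Zigzag
        rw [hfl, hcl]
        have hAB : ((2 * m * q + r : ℕ) : ℚ) / (2 * m) - ((q : ℤ) : ℚ)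
            ≤ (((q : ℤ) + 1 : ℤ) : ℚ) - ((2 * m * q + r : ℕ) : ℚ) / (2 * m) := by
          rw [hxval]; push_cast; linarith
        rw [min_eq_left hAB, hxval]
        push_cast; ring
      rw [hz]
      have h3 : m - (2 * m - r) = 0 := by omega
      rw [h3]
      push_cast
      field_simp
      push_cast [nsmul_eq_mul]; ring
    · have key : 1 / 2 ≤ (r : ℚ) / (2 * m) := by
        rw [le_div_iff₀ hm']
        have : (m : ℚ) ≤ r := by exact_mod_cast (by omega : m ≤ r)
        linarith
      have hz : Zigzag (((2 * m * q + r : ℕ) : ℚ) / (2 * m)) = 1 - (r : ℚ) / (2 * m) := by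
        unfold Zigzag
        rw [hfl, hcl]
        have hAB : (((q : ℤ) + 1 : ℤ) : ℚ) - ((2 * m * q + r : ℕ) : ℚ) / (2 * m)
            ≤ ((2 * m * q + r : ℕ) : ℚ) / (2 * m) - ((q : ℤ) : ℚ) := by
          rw [hxval]; push_cast; linarith
        rw [min_eq_right hAB, hxval]
        push_cast; ring
      rw [hz]
      have h3 : ((m - (2 * m - r) : ℕ) : ℤ) = (r : ℤ) - m := by omega
      rw [h3]
      push_cast
      field_simp
      push_cast [nsmul_eq_mul]; ring
end

section
/- For every natural number n and every natural number k, the sum over i from 0 to 2^k - 1 of floor((n+i)/2^(k+1)) equals n/2 - 2^k * Zigzag(n/2^(k+1)). -/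
theorem sum_floor_pow_eq_half_sub_zigzag (n k : ℕ) :
    ((∑ i ∈ Finset.range (2 ^ k), ⌊((n : ℚ) + i) / 2 ^ (k + 1)⌋ : ℤ) : ℚ)
      = (n : ℚ) / 2 - 2 ^ k * Zigzag ((n : ℚ) / 2 ^ (k + 1)) := by
  set m : ℕ := 2 ^ (k + 1) with hm
  set q : ℕ := n / m with hq
  set r : ℕ := n % m with hr
  have hmpos : 0 < m := Nat.pow_pos (by norm_num)
  have hrm : r < m := Nat.mod_lt _ hmpos
  have hn : n = m * q + r := (Nat.div_add_mod n m).symm ▸ by omega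
  have hm2 : m = 2 ^ k + 2 ^ k := by rw [hm]; ring
  -- each floor
  have hfloor : ∀ i : ℕ, ⌊((n : ℚ) + i) / 2 ^ (k + 1)⌋ = (q : ℤ) + ((r + i) / m : ℕ) := by
    intro i
    have : ((n : ℚ) + i) / 2 ^ (k + 1) = (((n + i : ℕ) : ℤ) : ℚ) / ((m : ℕ) : ℚ) := by
      push_cast [hm]; ring
    rw [this, Rat.floor_intCast_div_natCast]
    rw [hn]
    have : ((m * q + r + i : ℕ) : ℤ) = ((r + i : ℕ) : ℤ) + (m : ℤ) * q := by push_cast; ring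
    rw [this, Int.add_mul_ediv_left _ (q:ℤ) (by exact_mod_cast hmpos.ne'),
      ← Int.natCast_div]
    ring
  have hcount : ∑ i ∈ Finset.range (2 ^ k), (r + i) / m = r - 2 ^ k := by
    have h1 : ∀ i ∈ Finset.range (2 ^ k), (r + i) / m = if m ≤ r + i then 1 else 0 := by
      intro i hi
      simp only [Finset.mem_range] at hi
      by_cases h : m ≤ r + i
      · rw [if_pos h]
        exact Nat.div_eq_of_lt_le (by omega) (by omega)
      · rw [if_neg h]
        exact Nat.div_eq_of_lt (by omega)
    rw [Finset.sum_congr rfl h1]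
    have h2 : Finset.filter (fun i => m ≤ r + i) (Finset.range (2 ^ k))
        = Finset.Ico (m - r) (2 ^ k) := by
      ext i
      simp only [Finset.mem_filter, Finset.mem_range, Finset.mem_Ico]
      omega
    rw [Finset.sum_ite, Finset.sum_const, Finset.sum_const, h2, Nat.card_Ico]
    simp only [smul_eq_mul, mul_one, mul_zero, add_zero]
    omega
  have hS : (∑ i ∈ Finset.range (2 ^ k), ⌊((n : ℚ) + i) / 2 ^ (k + 1)⌋ : ℤ)
      = 2 ^ k * q + ((r - 2 ^ k : ℕ) : ℤ) := by
    rw [Finset.sum_congr rfl fun i _ => hfloor i, Finset.sum_add_distrib,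
      Finset.sum_const, ← Nat.cast_sum, hcount]
    simp [mul_comm]
  rw [hS]
  -- now compute Zigzag
  have hmQ : ((m : ℚ)) ≠ 0 := by positivity
  have hx : (n : ℚ) / 2 ^ (k + 1) = (((n : ℤ)) : ℚ) / ((m : ℕ) : ℚ) := by
    push_cast [hm]; ring
  have hfl : ⌊(n : ℚ) / 2 ^ (k + 1)⌋ = (q : ℤ) := by
    rw [hx, Rat.floor_intCast_div_natCast, ← Int.natCast_div, hq]
  have hxval : (n : ℚ) / 2 ^ (k + 1) = (q : ℚ) + (r : ℚ) / m := by
    rw [hx, hn]; push_cast; field_simp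
  by_cases hr0 : r = 0
  · -- n = m * q, everything integer
    have hzig : Zigzag ((n : ℚ) / 2 ^ (k + 1)) = 0 := by
      have hxq : (n : ℚ) / 2 ^ (k + 1) = ((q : ℤ) : ℚ) := by
        rw [hxval, hr0]; push_cast; ring
      rw [Zigzag, hxq, Int.floor_intCast, Int.ceil_intCast]
      simp
    have hr2 : r - 2 ^ k = 0 := by omega
    rw [hzig, hr2, hn, hr0, hm]
    push_cast
    ring
  · have hcl : ⌈(n : ℚ) / 2 ^ (k + 1)⌉ = (q : ℤ) + 1 := by
      rw [Int.ceil_eq_iff, hxval]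
      push_cast
      constructor
      · have : (0 : ℚ) < (r : ℚ) / m := by positivity
        linarith
      · have h1 : (r : ℚ) / m ≤ 1 := by
          rw [div_le_one (by positivity)]
          exact_mod_cast hrm.le
        linarith
    have hfrac : (n : ℚ) / 2 ^ (k + 1) - ⌊(n : ℚ) / 2 ^ (k + 1)⌋ = (r : ℚ) / m := by
      rw [hfl, hxval]; push_cast; ring
    have hcfrac : (⌈(n : ℚ) / 2 ^ (k + 1)⌉ : ℚ) - (n : ℚ) / 2 ^ (k + 1)
        = 1 - (r : ℚ) / m := by
      rw [hcl, hxval]; push_cast; ring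
    by_cases hcase : r ≤ 2 ^ k
    · have hzig : Zigzag ((n : ℚ) / 2 ^ (k + 1)) = (r : ℚ) / m := by
        rw [Zigzag, hfrac, hcfrac, min_eq_left]
        have hmpos' : (0 : ℚ) < m := by positivity
        have hmv : (m : ℚ) = 2 ^ k + 2 ^ k := by push_cast [hm2]; ring
        have hrq : (r : ℚ) ≤ 2 ^ k := by exact_mod_cast hcase
        rw [le_sub_iff_add_le]
        have h2 : (r : ℚ) / m + r / m = 2 * r / m := by ring
        rw [h2, div_le_one hmpos', hmv]
        linarith
      have hr2 : r - 2 ^ k = 0 := by omega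
      rw [hzig, hr2, hn, hm]
      have : ((m : ℚ)) = 2 ^ (k + 1) := by push_cast [hm]; ring
      push_cast [hm]
      field_simp
      ring
    · have hzig : Zigzag ((n : ℚ) / 2 ^ (k + 1)) = 1 - (r : ℚ) / m := by
        rw [Zigzag, hfrac, hcfrac, min_eq_right]
        have hmpos' : (0 : ℚ) < m := by positivity
        have hmv : (m : ℚ) = 2 ^ k + 2 ^ k := by push_cast [hm2]; ring
        have hrq : (2 ^ k : ℚ) ≤ r := by exact_mod_cast le_of_not_ge hcase
        have h1 : (1 : ℚ) ≤ 2 * (r : ℚ) / m := by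
          rw [le_div_iff₀ hmpos', hmv]; linarith
        have h2 : 2 * (r : ℚ) / m = r / m + r / m := by ring
        linarith
      rw [hzig, hn, hm]
      have hr2 : ((r - 2 ^ k : ℕ) : ℚ) = (r : ℚ) - 2 ^ k := by
        push_cast [Nat.cast_sub (le_of_not_ge hcase)]; ring
      push_cast [hm, Nat.cast_sub (le_of_not_ge hcase)]
      field_simp
      ring
end

section
/- Let B : N -> N satisfy B(0) = 0, B(1) = 0, and B(n) = floor(n/2) + B(floor(n/2)) + B(ceil(n/2)) for n >= 2. Then for every positive natural number n, B(n) = (n/2)*(floor(log2 n) + 1) - sum over k from 0 to floor(log2 n) of 2^k * Zigzag(n/2^(k+1)), as an equality of rational numbers. -/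
lemma zig_add_nat (x : ℚ) (n : ℕ) : Zigzag (x + n) = Zigzag x := by
  unfold Zigzag
  rw [Int.floor_add_natCast, Int.ceil_add_natCast]
  congr 1 <;> push_cast <;> ring

lemma zig_nat (n : ℕ) : Zigzag (n : ℚ) = 0 := by
  simp [Zigzag]

lemma zig_unit (y : ℚ) (h0 : 0 ≤ y) (h1 : y < 1) : Zigzag y = min y (1 - y) := by
  rcases eq_or_lt_of_le h0 with h | h
  · rw [← h]; simp [Zigzag]
  · have hf : ⌊y⌋ = 0 := Int.floor_eq_zero_iff.mpr ⟨h0, h1⟩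
    have hc : ⌈y⌉ = 1 := by
      rw [Int.ceil_eq_iff]
      push_cast
      constructor <;> linarith
    simp [Zigzag, hf, hc]

lemma min_half_left (a c : ℚ) (hc : 0 < c) (h : a + a ≤ c) : min (a/c) (1 - a/c) = a/c := by
  apply min_eq_left
  rw [le_sub_iff_add_le, ← add_div, div_le_one hc]
  linarith

lemma min_half_right (a c : ℚ) (hc : 0 < c) (h : c ≤ a + a) : min (a/c) (1 - a/c) = 1 - a/c := by
  apply min_eq_right
  rw [sub_le_iff_le_add, ← add_div, le_div_iff₀ hc]
  linarith

lemma zig_combine (m k : ℕ) :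
    2 * Zigzag ((2*(m:ℚ)+1) / 2^(k+2)) =
      Zigzag ((m:ℚ)/2^(k+1)) + Zigzag (((m:ℚ)+1)/2^(k+1)) := by
  obtain ⟨q, r, hr, hm⟩ : ∃ q r, r < 2^(k+1) ∧ m = 2^(k+1)*q + r :=
    ⟨m / 2^(k+1), m % 2^(k+1), Nat.mod_lt _ (by positivity),
      (Nat.div_add_mod m (2^(k+1))).symm⟩
  rw [show ((2:ℚ)^(k+2)) = 4*2^k from by ring, show ((2:ℚ)^(k+1)) = 2*2^k from by ring]
  have hP : (0:ℚ) < 2^k := by positivity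
  have hP1 : (1:ℚ) ≤ 2^k := by exact_mod_cast Nat.one_le_two_pow (n := k)
  have hD : (0:ℚ) < 2*2^k := by positivity
  have hD2 : (0:ℚ) < 4*2^k := by positivity
  have hmq : (m:ℚ) = 2*2^k*q + r := by
    push_cast [hm]; push_cast [pow_succ]; ring
  have hrq : (r:ℚ) + 1 ≤ 2*2^k := by
    have h' : r + 1 ≤ 2*2^k := by rw [pow_succ] at hr; omega
    exact_mod_cast h'
  have hr0 : (0:ℚ) ≤ r := by positivity
  have e1 : (2*(m:ℚ)+1)/(4*2^k) = (2*(r:ℚ)+1)/(4*2^k) + q := by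
    rw [hmq]; field_simp; ring
  have e2 : (m:ℚ)/(2*2^k) = (r:ℚ)/(2*2^k) + q := by
    rw [hmq]; field_simp; ring
  rw [e1, e2, zig_add_nat, zig_add_nat]
  have hb1 : Zigzag ((2*(r:ℚ)+1)/(4*2^k)) = min ((2*(r:ℚ)+1)/(4*2^k)) (1 - (2*(r:ℚ)+1)/(4*2^k)) := by
    apply zig_unit _ (by positivity)
    rw [div_lt_one hD2]; linarith
  have hb2 : Zigzag ((r:ℚ)/(2*2^k)) = min ((r:ℚ)/(2*2^k)) (1 - (r:ℚ)/(2*2^k)) := by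
    apply zig_unit _ (by positivity)
    rw [div_lt_one hD]; linarith
  rw [hb1, hb2]
  rcases eq_or_lt_of_le (Nat.succ_le_of_lt hr) with he | he
  · -- r + 1 = 2^(k+1)
    have hre : (r:ℚ) = 2*2^k - 1 := by
      have : (r:ℚ) + 1 = ((2^(k+1):ℕ):ℚ) := by exact_mod_cast congrArg (Nat.cast (R := ℚ)) he
      push_cast [pow_succ] at this; linarith
    have e3 : ((m:ℚ)+1)/(2*2^k) = ((q+1:ℕ):ℚ) := by
      rw [hmq, hre]; push_cast; field_simp; ring
    rw [e3, zig_nat, hre]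
    rw [min_half_right _ _ hD2 (by linarith), min_half_right _ _ hD (by linarith)]
    field_simp
    ring
  · -- r + 1 < 2^(k+1)
    have hre : (r:ℚ) + 2 ≤ 2*2^k := by
      have h' : r + 2 ≤ 2*2^k := by rw [pow_succ] at he; omega
      exact_mod_cast h'
    have e3 : ((m:ℚ)+1)/(2*2^k) = ((r:ℚ)+1)/(2*2^k) + q := by
      rw [hmq]; field_simp; ring
    rw [e3, zig_add_nat]
    have hb3 : Zigzag (((r:ℚ)+1)/(2*2^k)) = min (((r:ℚ)+1)/(2*2^k)) (1 - ((r:ℚ)+1)/(2*2^k)) := by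
      apply zig_unit _ (by positivity)
      rw [div_lt_one hD]; linarith
    rw [hb3]
    rcases lt_or_ge r (2^k) with hc | hc
    · have hcq : (r:ℚ) + 1 ≤ 2^k := by exact_mod_cast hc
      rw [min_half_left _ _ hD2 (by linarith), min_half_left _ _ hD (by linarith),
          min_half_left _ _ hD (by linarith)]
      field_simp
      ring
    · have hcq : (2:ℚ)^k ≤ r := by exact_mod_cast hc
      rw [min_half_right _ _ hD2 (by linarith), min_half_right _ _ hD (by linarith),
          min_half_right _ _ hD (by linarith)]
      field_simp
      ring
def G (n M : ℕ) : ℚ :=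
  (n:ℚ)/2 * (M + 1) - ∑ k ∈ Finset.range (M+1), 2^k * Zigzag ((n:ℚ)/2^(k+1))

lemma G_step (n M : ℕ) (h : n ≤ 2^(M+1)) : G n (M+1) = G n M := by
  unfold G
  rw [Finset.sum_range_succ]
  have hq : (n:ℚ) ≤ 2^(M+1) := by exact_mod_cast h
  have hpow : (2:ℚ)^(M+1+1) = 2^(M+1) * 2 := by ring
  have hppos : (0:ℚ) < 2^(M+1) := by positivity
  have hlt : (n:ℚ)/2^(M+1+1) < 1 := by
    rw [div_lt_one (by positivity), hpow]; linarith
  have hz : Zigzag ((n:ℚ)/2^(M+1+1)) = (n:ℚ)/2^(M+1+1) := by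
    rw [zig_unit _ (by positivity) hlt]
    apply min_half_left _ _ (by positivity)
    rw [hpow]; linarith
  have hcancel : (2:ℚ)^(M+1) * ((n:ℚ)/2^(M+1+1)) = (n:ℚ)/2 := by
    rw [hpow, ← div_div]
    field_simp
  rw [hz, hcancel]
  push_cast
  ring

lemma G_ext (n L M : ℕ) (hn : n < 2^(L+1)) (h : L ≤ M) : G n M = G n L := by
  induction M with
  | zero => have : L = 0 := Nat.le_zero.mp h; rw [this]
  | succ M ih =>
    rcases Nat.lt_or_ge L (M+1) with h' | h'
    · have hLM : L ≤ M := by omega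
      rw [G_step n M (le_trans hn.le (Nat.pow_le_pow_right (by norm_num) (by omega))), ih hLM]
    · have : L = M+1 := by omega
      rw [this]

lemma G_even (m L : ℕ) : G (2*m) (L+1) = (m:ℚ) + 2 * G m L := by
  unfold G
  rw [Finset.sum_range_succ']
  have h0 : ((2*m:ℕ):ℚ) / 2^(0+1) = ((m:ℕ):ℚ) := by push_cast; ring
  rw [h0, zig_nat]
  have hsum : ∀ k ∈ Finset.range (L+1),
      (2:ℚ)^(k+1) * Zigzag (((2*m:ℕ):ℚ)/2^(k+1+1))
      = 2 * (2^k * Zigzag ((m:ℚ)/2^(k+1))) := by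
    intro k _
    have harg : ((2*m:ℕ):ℚ)/2^(k+1+1) = (m:ℚ)/2^(k+1) := by
      push_cast
      field_simp
      ring
    rw [harg]; ring
  rw [Finset.sum_congr rfl hsum, ← Finset.mul_sum]
  push_cast
  ring

lemma G_odd (m L : ℕ) : G (2*m+1) (L+1) = (m:ℚ) + G m L + G (m+1) L := by
  unfold G
  rw [Finset.sum_range_succ']
  have h0 : Zigzag (((2*m+1:ℕ):ℚ) / 2^(0+1)) = 1/2 := by
    have harg : ((2*m+1:ℕ):ℚ)/2^(0+1) = 1/2 + (m:ℕ) := by push_cast; ring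
    rw [harg, zig_add_nat, zig_unit _ (by norm_num) (by norm_num)]
    norm_num
  have hsum : ∀ k ∈ Finset.range (L+1),
      (2:ℚ)^(k+1) * Zigzag (((2*m+1:ℕ):ℚ)/2^(k+1+1))
      = 2^k * Zigzag ((m:ℚ)/2^(k+1)) + 2^k * Zigzag (((m+1:ℕ):ℚ)/2^(k+1)) := by
    intro k _
    have harg : ((2*m+1:ℕ):ℚ)/2^(k+1+1) = (2*(m:ℚ)+1)/2^(k+2) := by push_cast; ring_nf
    have harg2 : ((m+1:ℕ):ℚ) = (m:ℚ)+1 := by push_cast; ring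
    calc (2:ℚ)^(k+1) * Zigzag (((2*m+1:ℕ):ℚ)/2^(k+1+1))
        = 2^k * (2 * Zigzag ((2*(m:ℚ)+1)/2^(k+2))) := by rw [harg]; ring
      _ = 2^k * (Zigzag ((m:ℚ)/2^(k+1)) + Zigzag (((m:ℚ)+1)/2^(k+1))) := by rw [zig_combine]
      _ = 2^k * Zigzag ((m:ℚ)/2^(k+1)) + 2^k * Zigzag (((m+1:ℕ):ℚ)/2^(k+1)) := by
          rw [harg2]; ring
  rw [h0, Finset.sum_congr rfl hsum, Finset.sum_add_distrib]
  push_cast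
  ring

theorem bestCase_formula (B : ℕ → ℕ) (hB0 : B 0 = 0) (hB1 : B 1 = 0)
    (hB : ∀ n, 2 ≤ n → B n = n / 2 + B (n / 2) + B ((⌈(n : ℚ) / 2⌉).toNat)) :
    ∀ n : ℕ, 0 < n →
      (B n : ℚ) = (n : ℚ) / 2 * (Nat.log 2 n + 1)
        - ∑ k ∈ Finset.range (Nat.log 2 n + 1),
            2 ^ k * Zigzag ((n : ℚ) / 2 ^ (k + 1)) := by
  suffices h : ∀ n : ℕ, 0 < n → (B n : ℚ) = G n (Nat.log 2 n) by
    intro n hn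
    exact h n hn
  intro n
  induction n using Nat.strong_induction_on with
  | _ n ih =>
    intro hn
    rcases Nat.lt_or_ge n 2 with h2 | h2
    · have hn1 : n = 1 := by omega
      subst hn1
      rw [hB1, Nat.log_one_right]
      have hz : Zigzag ((1:ℚ)/2) = 1/2 := by
        rw [zig_unit _ (by norm_num) (by norm_num)]; norm_num
      unfold G
      rw [Finset.sum_range_one]
      norm_num [hz]
    · have hrec := hB n h2
      rcases Nat.even_or_odd n with ⟨m, hm⟩ | ⟨m, hm⟩
      · -- even case
        have h2m : n = 2*m := by omega
        subst h2m
        have hm0 : 1 ≤ m := by omega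
        set L := Nat.log 2 m with hL
        have hpl : 2^L ≤ m := Nat.pow_log_le_self 2 (by omega)
        have hpu : m < 2^(L+1) := Nat.lt_pow_succ_log_self (by norm_num) m
        have hlog : Nat.log 2 (2*m) = L + 1 :=
          Nat.log_eq_of_pow_le_of_lt_pow (by rw [pow_succ]; omega) (by rw [pow_succ]; omega)
        have hdiv : 2*m / 2 = m := by omega
        have hceil : (⌈((2*m:ℕ):ℚ)/2⌉).toNat = m := by
          have harg : ((2*m:ℕ):ℚ)/2 = ((m:ℕ):ℚ) := by push_cast; ring
          rw [harg, Int.ceil_natCast]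
          omega
        have ihm : (B m : ℚ) = G m L := ih m (by omega) (by omega)
        rw [hrec, hdiv, hceil, hlog, G_even]
        push_cast
        rw [ihm]
        ring
      · -- odd case
        have hm0 : 1 ≤ m := by omega
        subst hm
        set L := Nat.log 2 m with hL
        have hpl : 2^L ≤ m := Nat.pow_log_le_self 2 (by omega)
        have hpu : m < 2^(L+1) := Nat.lt_pow_succ_log_self (by norm_num) m
        have hlog : Nat.log 2 (2*m+1) = L + 1 :=
          Nat.log_eq_of_pow_le_of_lt_pow (by rw [pow_succ]; omega) (by rw [pow_succ]; omega)
        have hdiv : (2*m+1) / 2 = m := by omega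
        have hceil : (⌈((2*m+1:ℕ):ℚ)/2⌉).toNat = m+1 := by
          have harg : ((2*m+1:ℕ):ℚ)/2 = 1/2 + ((m:ℕ):ℚ) := by push_cast; ring
          have hhalf : ⌈(1/2 : ℚ)⌉ = 1 := by
            rw [Int.ceil_eq_iff] <;> norm_num
          rw [harg, Int.ceil_add_natCast, hhalf]
          omega
        have ihm : (B m : ℚ) = G m L := ih m (by omega) (by omega)
        have ihm1 : (B (m+1) : ℚ) = G (m+1) (Nat.log 2 (m+1)) := ih (m+1) (by omega) (by omega)
        have hGm1 : G (m+1) (Nat.log 2 (m+1)) = G (m+1) L := by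
          have hle : Nat.log 2 (m+1) ≤ L + 1 := by
            have := Nat.log_mono_right (b := 2) (show m+1 ≤ 2*m+1 by omega)
            omega
          have h1 : G (m+1) (L+1) = G (m+1) (Nat.log 2 (m+1)) :=
            G_ext (m+1) (Nat.log 2 (m+1)) (L+1)
              (Nat.lt_pow_succ_log_self (by norm_num) (m+1)) hle
          have h2' : G (m+1) (L+1) = G (m+1) L := G_step (m+1) L (by omega)
          rw [← h1, h2']
        rw [hrec, hdiv, hceil, hlog, G_odd]
        push_cast
        rw [ihm, ihm1, hGm1]
end

section
/- Let B : N -> N satisfy B(1) = 0 and B(n) = floor(n/2) + B(floor(n/2)) + B(ceil(n/2)) for n >= 2. Then for every positive natural number n, B(n) = (n*ceil(log2 n))/2 - (1/2) * sum over k from 1 to ceil(log2 n) of 2^k * Zigzag(n/2^k), as an equality of rationals. -/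
def Tm (n k : ℕ) : ℕ := n - min (n % 2^k) (2^k - n % 2^k)

lemma Tm_one (n : ℕ) : Tm n 1 = 2 * (n / 2) := by
  unfold Tm
  have h1 : n % 2 ^ 1 = n % 2 := by norm_num
  have h2 : n % 2 < 2 := Nat.mod_lt _ (by norm_num)
  have h3 : n % 2 + 2 * (n / 2) = n := Nat.mod_add_div n 2
  simp only [h1]
  omega

lemma Tm_zero_of_le (n k : ℕ) (h : 2 * n ≤ 2^k) : Tm n k = 0 := by
  unfold Tm
  have hp : 0 < 2^k := Nat.pow_pos (by norm_num)
  have h2 : n % 2^k = n := Nat.mod_eq_of_lt (by omega)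
  rw [h2]
  simp only [min_def]
  split_ifs <;> omega

lemma Tm_succ (n k : ℕ) : Tm n (k+2) = Tm (n/2) (k+1) + Tm ((n+1)/2) (k+1) := by
  unfold Tm
  have hp : 0 < 2^k := Nat.pow_pos (by norm_num)
  have hpow : (2:ℕ)^(k+2) = 2 * 2^(k+1) := by ring
  have h1 : n / 2 % 2^(k+1) = n % (2 * 2^(k+1)) / 2 :=
    (Nat.mod_mul_right_div_self n 2 (2^(k+1))).symm
  have h2 : (n+1) / 2 % 2^(k+1) = (n+1) % (2 * 2^(k+1)) / 2 :=
    (Nat.mod_mul_right_div_self (n+1) 2 (2^(k+1))).symm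
  have h3 : (n+1) % (2 * 2^(k+1)) =
      if n % (2 * 2^(k+1)) + 1 = 2 * 2^(k+1) then 0 else n % (2 * 2^(k+1)) + 1 := by
    split_ifs with h
    · have hd := Nat.div_add_mod n (2 * 2^(k+1))
      have he : n + 1 = (2 * 2^(k+1)) * (n / (2 * 2^(k+1))) + 2 * 2^(k+1) := by omega
      rw [he, Nat.mul_add_mod, Nat.mod_self]
    · have hRlt : n % (2 * 2^(k+1)) < 2 * 2^(k+1) := Nat.mod_lt _ (by positivity)
      rw [Nat.add_mod, Nat.mod_eq_of_lt (a := 1) (by omega), Nat.mod_eq_of_lt (by omega)]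
  rw [hpow, h1, h2, h3]
  have hRlt : n % (2 * 2^(k+1)) < 2 * 2^(k+1) := Nat.mod_lt _ (by positivity)
  have hRn : n % (2 * 2^(k+1)) ≤ n := Nat.mod_le n _
  have hp2 : 2^(k+1) = 2 * 2^k := by ring
  generalize hR : n % (2 * 2^(k+1)) = R at *
  rw [hp2] at *
  generalize hP : 2^k = p at *
  clear h1 h2 h3 hR hpow hp2 hP
  simp only [min_def]
  split_ifs <;> omega

lemma Tm_sum (B : ℕ → ℕ) (hB1 : B 1 = 0)
    (hB : ∀ n, 2 ≤ n → B n = n / 2 + B (n / 2) + B ((n+1)/2)) :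
    ∀ n, 1 ≤ n → ∀ M, n ≤ 2^M → 2 * B n = ∑ k ∈ Finset.range M, Tm n (k+1) := by
  intro n
  induction n using Nat.strong_induction_on with
  | _ n ih =>
    intro hn M hM
    rcases eq_or_lt_of_le hn with h1 | h2
    · -- n = 1
      have hz : ∀ k ∈ Finset.range M, Tm 1 (k+1) = 0 := by
        intro k _
        apply Tm_zero_of_le
        have h4 : (2:ℕ)^(k+1) = 2 * 2^k := by ring
        have hp : 0 < 2^k := Nat.pow_pos (by norm_num)
        omega
      rw [← h1, hB1, Finset.sum_eq_zero hz]
      rfl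
    · -- n ≥ 2
      have hn2 : 2 ≤ n := h2
      cases M with
      | zero => simp at hM; omega
      | succ N =>
        have h2N : (2:ℕ)^(N+1) = 2 * 2^N := by ring
        have hq : n / 2 ≤ 2^N := by omega
        have hc : (n+1) / 2 ≤ 2^N := by omega
        have ihq := ih (n/2) (by omega) (by omega) N hq
        have ihc := ih ((n+1)/2) (by omega) (by omega) N hc
        rw [hB n hn2]
        rw [Finset.sum_range_succ' (fun k => Tm n (k+1)) N]
        have hcong : ∑ k ∈ Finset.range N, Tm n (k+1+1)
            = ∑ k ∈ Finset.range N, (Tm (n/2) (k+1) + Tm ((n+1)/2) (k+1)) :=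
          Finset.sum_congr rfl fun k _ => Tm_succ n k
        rw [hcong, Finset.sum_add_distrib, Tm_one]
        omega

lemma ceil_half (n : ℕ) : (⌈(n:ℚ)/2⌉).toNat = (n+1)/2 := by
  have h : ⌈(n:ℚ)/2⌉ = (((n+1)/2 : ℕ) : ℤ) := by
    rcases Nat.even_or_odd n with ⟨t, ht⟩ | ⟨t, ht⟩
    · subst ht
      have h1 : (t + t + 1)/2 = t := by omega
      have h2 : ((t + t : ℕ) : ℚ)/2 = (t : ℚ) := by push_cast; ring
      rw [h1, h2]
      exact_mod_cast Int.ceil_intCast (t : ℤ)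
    · subst ht
      have h1 : (2*t + 1 + 1)/2 = t + 1 := by omega
      rw [h1, Int.ceil_eq_iff]
      constructor
      · push_cast; linarith
      · push_cast; linarith
  rw [h, Int.toNat_natCast]

lemma zigzag_eq (n k : ℕ) :
    Zigzag ((n:ℚ)/2^k) = (min (n % 2^k) (2^k - n % 2^k) : ℕ) / (2^k : ℚ) := by
  have hp : (0:ℚ) < 2^k := by positivity
  have hd := Nat.div_add_mod n (2^k)
  have hrlt : n % 2^k < 2^k := Nat.mod_lt _ (Nat.pow_pos (by norm_num))
  set r := n % 2^k with hr
  set q := n / 2^k with hqdef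
  have hx : (n:ℚ)/2^k = q + r/2^k := by
    field_simp
    push_cast
    have : (n : ℚ) = 2^k * q + r := by exact_mod_cast congrArg (Nat.cast : ℕ → ℚ) hd.symm
    linarith [this]
  have hfrac0 : (0:ℚ) ≤ (r:ℚ)/2^k := by positivity
  have hfrac1 : (r:ℚ)/2^k < 1 := by
    rw [div_lt_one hp]; exact_mod_cast hrlt
  have hfloor : ⌊(n:ℚ)/2^k⌋ = (q : ℤ) := by
    rw [hx, Int.floor_eq_iff]
    constructor
    · push_cast; linarith
    · push_cast; linarith
  by_cases hr0 : r = 0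
  · have hx' : (n:ℚ)/2^k = (q:ℚ) := by rw [hx, hr0]; push_cast; ring
    rw [hx']
    unfold Zigzag
    have : ⌊(q:ℚ)⌋ = (q:ℤ) := by exact_mod_cast Int.floor_intCast (q:ℤ)
    have hc : ⌈(q:ℚ)⌉ = (q:ℤ) := by exact_mod_cast Int.ceil_intCast (q:ℤ)
    rw [this, hc, hr0]
    simp
  · have hceil : ⌈(n:ℚ)/2^k⌉ = (q : ℤ) + 1 := by
      rw [hx, Int.ceil_eq_iff]
      constructor
      · push_cast
        have : (0:ℚ) < (r:ℚ)/2^k := by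
          apply div_pos _ hp
          exact_mod_cast Nat.pos_of_ne_zero hr0
        linarith
      · push_cast; linarith
    unfold Zigzag
    rw [hfloor, hceil, hx]
    have hmin : min r (2^k - r) ≤ r := min_le_left _ _
    have hle : r ≤ 2^k := le_of_lt hrlt
    rw [Nat.cast_min, Nat.cast_sub hle]
    push_cast
    rw [← min_div_div_right (le_of_lt hp)]
    congr 1
    · ring
    · field_simp; ring

theorem B_eq_clog_formula (B : ℕ → ℕ) (hB1 : B 1 = 0)
    (hB : ∀ n, 2 ≤ n → B n = n / 2 + B (n / 2) + B ((⌈(n : ℚ) / 2⌉).toNat)) :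
    ∀ n : ℕ, 0 < n →
      (B n : ℚ) = (n : ℚ) * Nat.clog 2 n / 2
        - (1 / 2) * ∑ k ∈ Finset.Icc 1 (Nat.clog 2 n),
            (2 : ℚ) ^ k * Zigzag ((n : ℚ) / 2 ^ k) := by
  have hB' : ∀ n, 2 ≤ n → B n = n / 2 + B (n / 2) + B ((n+1)/2) := by
    intro n h
    rw [hB n h, ceil_half]
  intro n hn
  set m := Nat.clog 2 n with hm
  have hle : n ≤ 2^m := Nat.le_pow_clog (by norm_num) n
  have hsum := Tm_sum B hB1 hB' n hn m hle
  -- key termwise identity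
  have key : ∀ k : ℕ, (2:ℚ)^(k+1) * Zigzag ((n:ℚ)/2^(k+1)) = (n:ℚ) - (Tm n (k+1) : ℕ) := by
    intro k
    rw [zigzag_eq]
    have hp : (0:ℚ) < 2^(k+1) := by positivity
    rw [mul_div_cancel₀ _ (ne_of_gt hp)]
    unfold Tm
    have hrlt : n % 2^(k+1) < 2^(k+1) := Nat.mod_lt _ (Nat.pow_pos (by norm_num))
    have hmin : min (n % 2^(k+1)) (2^(k+1) - n % 2^(k+1)) ≤ n :=
      le_trans (min_le_left _ _) (Nat.mod_le n _)
    rw [Nat.cast_sub hmin]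
    ring
  -- convert Icc sum to range sum
  have hIcc : ∑ k ∈ Finset.Icc 1 m, (2:ℚ)^k * Zigzag ((n:ℚ)/2^k)
      = ∑ k ∈ Finset.range m, (2:ℚ)^(k+1) * Zigzag ((n:ℚ)/2^(k+1)) := by
    rw [← Finset.Ico_add_one_right_eq_Icc, Finset.sum_Ico_eq_sum_range]
    simp [add_comm]
  rw [hIcc]
  have hterm : ∑ k ∈ Finset.range m, (2:ℚ)^(k+1) * Zigzag ((n:ℚ)/2^(k+1))
      = ∑ k ∈ Finset.range m, ((n:ℚ) - (Tm n (k+1) : ℕ)) :=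
    Finset.sum_congr rfl fun k _ => key k
  rw [hterm, Finset.sum_sub_distrib, Finset.sum_const, Finset.card_range]
  have hcast : (∑ k ∈ Finset.range m, ((Tm n (k+1) : ℕ) : ℚ)) = ((2 * B n : ℕ) : ℚ) := by
    rw [hsum]; push_cast; ring
  rw [hcast]
  push_cast
  ring
end

section
/- Define F(n) = sum over k from 1 to floor(log2 n) of 2^k * Zigzag(n/2^k) for positive natural n. Then for every positive natural number n, 0 <= F(n) <= (n-1)/2. -/
def Tq (n k : ℕ) : ℚ := min ((n % 2^k : ℕ) : ℚ) ((2^k : ℚ) - ((n % 2^k : ℕ) : ℚ))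

lemma zig_eq (n k : ℕ) : (2:ℚ)^k * Zigzag ((n:ℚ)/2^k) = Tq n k := by
  set q := n / 2^k with hq
  set r := n % 2^k with hr
  have hpk : (0:ℚ) < 2^k := by positivity
  have hrlt : r < 2^k := Nat.mod_lt _ (by positivity)
  have hrq : (r:ℚ) < 2^k := by exact_mod_cast hrlt
  have hn : (n:ℚ) = 2^k * q + r := by
    have h : 2^k * q + r = n := Nat.div_add_mod n (2^k)
    exact_mod_cast h.symm
  have hx : (n:ℚ)/2^k = q + r/2^k := by rw [hn]; field_simp
  have hr0 : (0:ℚ) ≤ (r:ℚ)/2^k := by positivity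
  have hr1 : (r:ℚ)/2^k < 1 := by rw [div_lt_one hpk]; exact hrq
  have hfloor : ⌊(n:ℚ)/2^k⌋ = (q:ℤ) := by
    rw [Int.floor_eq_iff, hx]
    push_cast
    constructor <;> linarith
  rcases Nat.eq_zero_or_pos r with h0 | hpos
  · have hxq : (n:ℚ)/2^k = q := by rw [hx, h0]; push_cast; ring
    simp [Zigzag, Tq, ← hr, h0, hxq, Int.floor_intCast, Int.ceil_intCast, hpk.le]
  · have hceil : ⌈(n:ℚ)/2^k⌉ = (q:ℤ) + 1 := by
      rw [Int.ceil_eq_iff, hx]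
      push_cast
      have : (0:ℚ) < (r:ℚ)/2^k := by positivity
      constructor <;> linarith
    rw [Zigzag, hfloor, hceil, hx, Tq, ← hr]
    push_cast
    rw [mul_min_of_nonneg _ _ (by positivity : (0:ℚ) ≤ 2^k)]
    congr 1 <;> field_simp <;> ring

def Sq (n : ℕ) : ℚ := ∑ i ∈ Finset.range (Nat.log 2 n), Tq n (i+1)

def cI (n : ℕ) : ℤ := ∑ i ∈ Finset.range (Nat.log 2 n), (1 - 2 * ((n / 2^i) % 2 : ℕ))

def Bq (n : ℕ) : ℚ := max ((2:ℚ)^(cI n)) 1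

lemma Tq_nonneg (n k : ℕ) : 0 ≤ Tq n k := by
  have hrlt : n % 2^k < 2^k := Nat.mod_lt _ (by positivity)
  have : ((n % 2^k : ℕ):ℚ) ≤ 2^k := by exact_mod_cast hrlt.le
  unfold Tq
  apply le_min (by positivity)
  linarith

lemma log_two_mul (m : ℕ) (hm : 0 < m) : Nat.log 2 (2*m) = Nat.log 2 m + 1 := by
  rw [mul_comm]
  exact Nat.log_mul_base (by norm_num) (by omega)

lemma log_two_mul_add_one (m : ℕ) (hm : 0 < m) :
    Nat.log 2 (2*m+1) = Nat.log 2 m + 1 := by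
  have h1 : 2 ^ Nat.log 2 m ≤ m := Nat.pow_log_le_self 2 (by omega)
  have h2 : m < 2 ^ (Nat.log 2 m + 1) := Nat.lt_pow_succ_log_self (by norm_num) m
  apply Nat.log_eq_of_pow_le_of_lt_pow
  · rw [pow_succ]; omega
  · rw [pow_succ]; omega

lemma mod_even (m i : ℕ) : (2*m) % 2^(i+2) = 2 * (m % 2^(i+1)) := by
  have hpow : (2:ℕ)^(i+2) = 2 * 2^(i+1) := by ring
  rw [hpow, Nat.mul_mod_mul_left]

lemma mod_odd (m i : ℕ) : (2*m+1) % 2^(i+2) = 2 * (m % 2^(i+1)) + 1 := by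
  have hpow : (2:ℕ)^(i+2) = 2 * 2^(i+1) := by ring
  have hrlt : m % 2^(i+1) < 2^(i+1) := Nat.mod_lt _ (by positivity)
  obtain ⟨q, hq⟩ : ∃ q, m = 2^(i+1) * q + m % 2^(i+1) :=
    ⟨m / 2^(i+1), ((Nat.div_add_mod m _).symm)⟩
  nth_rewrite 1 [hq]
  have heq : 2*(2^(i+1) * q + m % 2^(i+1))+1
      = (2 * (m % 2^(i+1)) + 1) + 2^(i+2) * q := by rw [hpow]; ring
  rw [heq, Nat.add_mul_mod_self_left, Nat.mod_eq_of_lt (by omega)]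

lemma Tq_even_succ (m i : ℕ) : Tq (2*m) (i+2) = 2 * Tq m (i+1) := by
  unfold Tq
  rw [mod_even]
  rw [mul_min_of_nonneg _ _ (by norm_num : (0:ℚ) ≤ 2)]
  congr 1
  · push_cast; ring
  · push_cast; ring

lemma Tq_even_one (m : ℕ) : Tq (2*m) 1 = 0 := by
  have : (2*m) % 2^1 = 0 := by omega
  simp [Tq, this]

lemma Tq_odd_one (m : ℕ) : Tq (2*m+1) 1 = 1 := by
  have h : (2*m+1) % 2 = 1 := by omega
  simp [Tq, pow_one, h]
  norm_num

lemma Tq_odd_succ (m i : ℕ) :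
    Tq (2*m+1) (i+2) ≤ 2 * Tq m (i+1) + (1 - 2 * ((m / 2^i) % 2 : ℕ) : ℚ) := by
  have hbit : m % 2^(i+1) = m % 2^i + 2^i * ((m / 2^i) % 2) := by
    have hpow : (2:ℕ)^(i+1) = 2^i * 2 := by ring
    rw [hpow, Nat.mod_mul]
  have hmi : m % 2^i < 2^i := Nat.mod_lt _ (by positivity)
  have hrlt : m % 2^(i+1) < 2^(i+1) := Nat.mod_lt _ (by positivity)
  have hpowq : ((2:ℚ))^(i+2) = 2 * 2^(i+1) := by ring
  unfold Tq
  rw [mod_odd]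
  rcases Nat.mod_two_eq_zero_or_one (m / 2^i) with hb | hb
  · rw [hb]
    rw [hb, mul_zero, add_zero] at hbit
    have hrsmall : m % 2^(i+1) < 2^i := by omega
    have h2 : (2:ℚ)^(i+1) = 2 * 2^i := by ring
    have hminl : min ((m % 2^(i+1) : ℕ):ℚ) ((2:ℚ)^(i+1) - (m % 2^(i+1) : ℕ)) =
        ((m % 2^(i+1) : ℕ):ℚ) := by
      apply min_eq_left
      have : ((m % 2^(i+1) : ℕ):ℚ) < 2^i := by exact_mod_cast hrsmall
      rw [h2]; linarith
    rw [hminl]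
    calc _ ≤ ((2 * (m % 2^(i+1)) + 1 : ℕ):ℚ) := min_le_left _ _
    _ ≤ _ := by push_cast; linarith
  · rw [hb]
    rw [hb, mul_one] at hbit
    have hrbig : 2^i ≤ m % 2^(i+1) := by omega
    have hrbq : (2:ℚ)^i ≤ ((m % 2^(i+1) : ℕ):ℚ) := by exact_mod_cast hrbig
    have h2 : (2:ℚ)^(i+1) = 2 * 2^i := by ring
    have hminr : min ((m % 2^(i+1) : ℕ):ℚ) ((2:ℚ)^(i+1) - (m % 2^(i+1) : ℕ)) =
        (2:ℚ)^(i+1) - (m % 2^(i+1) : ℕ) := by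
      apply min_eq_right
      rw [h2]; linarith
    rw [hminr]
    calc _ ≤ (2:ℚ)^(i+2) - ((2 * (m % 2^(i+1)) + 1 : ℕ):ℚ) := min_le_right _ _
    _ ≤ _ := by push_cast; rw [hpowq]; linarith

lemma Sq_even (m : ℕ) (hm : 0 < m) : Sq (2*m) = 2 * Sq m := by
  unfold Sq
  rw [log_two_mul m hm, Finset.sum_range_succ']
  rw [Tq_even_one, add_zero, Finset.mul_sum]
  exact Finset.sum_congr rfl fun i _ => Tq_even_succ m i

lemma cI_even (m : ℕ) (hm : 0 < m) : cI (2*m) = cI m + 1 := by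
  unfold cI
  rw [log_two_mul m hm, Finset.sum_range_succ']
  have h0 : ((2*m) / 2^0) % 2 = 0 := by simp [Nat.mul_mod_right]
  rw [h0]
  have hterm : ∀ i, ((2*m) / 2^(i+1)) % 2 = (m / 2^i) % 2 := by
    intro i
    congr 1
    rw [pow_succ']
    exact Nat.mul_div_mul_left m (2^i) (by norm_num)
  simp only [hterm]
  push_cast
  ring

lemma cI_odd (m : ℕ) (hm : 0 < m) : cI (2*m+1) = cI m - 1 := by
  unfold cI
  rw [log_two_mul_add_one m hm, Finset.sum_range_succ']
  have h0 : ((2*m+1) / 2^0) % 2 = 1 := by simp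
  rw [h0]
  have hterm : ∀ i, ((2*m+1) / 2^(i+1)) % 2 = (m / 2^i) % 2 := by
    intro i
    congr 1
    rw [pow_succ', ← Nat.div_div_eq_div_mul]
    congr 1
    omega
  simp only [hterm]
  push_cast
  ring

lemma Sq_odd (m : ℕ) (hm : 0 < m) : Sq (2*m+1) ≤ 2 * Sq m + (cI m : ℚ) + 1 := by
  unfold Sq
  rw [log_two_mul_add_one m hm, Finset.sum_range_succ', Tq_odd_one]
  have hsum : ∑ i ∈ Finset.range (Nat.log 2 m), Tq (2*m+1) (i+1+1)
      ≤ ∑ i ∈ Finset.range (Nat.log 2 m),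
        (2 * Tq m (i+1) + ((1:ℚ) - 2 * ((m / 2^i) % 2 : ℕ))) :=
    Finset.sum_le_sum fun i _ => Tq_odd_succ m i
  have hc : (cI m : ℚ) = ∑ i ∈ Finset.range (Nat.log 2 m),
      ((1:ℚ) - 2 * ((m / 2^i) % 2 : ℕ)) := by
    unfold cI
    rw [Int.cast_sum]
    apply Finset.sum_congr rfl
    intro i _
    push_cast
    norm_cast
    rw [Int.subNatNat_eq_coe]
    simp only [Int.cast_sub, Int.cast_natCast, Nat.cast_mul, Nat.cast_one, Nat.cast_ofNat, Int.cast_one, Int.cast_mul, Int.cast_ofNat]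
  rw [Finset.sum_add_distrib, ← Finset.mul_sum] at hsum
  rw [hc]
  linarith

lemma two_pow_aux (e : ℕ) : 2*e + 3 ≤ 3 * 2^e := by
  induction e with
  | zero => norm_num
  | succ n ih =>
    have : (1:ℕ) ≤ 2^n := Nat.one_le_two_pow
    rw [pow_succ]
    omega

lemma B_even (c : ℤ) : max ((2:ℚ)^(c+1)) 1 ≤ 2 * max ((2:ℚ)^c) 1 := by
  apply max_le
  · rw [zpow_add_one₀ (by norm_num)]
    have h := le_max_left ((2:ℚ)^c) 1
    linarith
  · have h := le_max_right ((2:ℚ)^c) 1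
    linarith

lemma B_odd (c : ℤ) : max ((2:ℚ)^(c-1)) 1 + 2*(c:ℚ) + 1 ≤ 2 * max ((2:ℚ)^c) 1 := by
  rcases le_or_gt c 0 with hc | hc
  · have h1 : (2:ℚ)^(c-1) ≤ 1 := zpow_le_one_of_nonpos₀ (by norm_num) (by omega)
    rw [max_eq_right h1]
    have h2 := le_max_right ((2:ℚ)^c) 1
    have hcq : (c:ℚ) ≤ 0 := by exact_mod_cast hc
    linarith
  · obtain ⟨e, he⟩ : ∃ e : ℕ, c = (e:ℤ) + 1 := ⟨(c-1).toNat, by omega⟩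
    subst he
    have h1 : ((e:ℤ)+1) - 1 = (e:ℤ) := by ring
    rw [h1, zpow_natCast]
    have h2 : (2:ℚ)^((e:ℤ)+1) = 2^(e+1) := by
      rw [← zpow_natCast]; push_cast; ring_nf
    rw [h2]
    have h3 : (1:ℚ) ≤ 2^e := one_le_pow₀ (by norm_num)
    have h4 : (1:ℚ) ≤ (2:ℚ)^(e+1) := one_le_pow₀ (by norm_num)
    rw [max_eq_left h3, max_eq_left h4]
    have h5 : 2*e + 3 ≤ 3 * 2^e := two_pow_aux e
    have h5q : 2*(e:ℚ) + 3 ≤ 3 * 2^e := by exact_mod_cast h5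
    have h6 : (2:ℚ)^(e+1) = 2 * 2^e := by ring
    push_cast
    rw [h6]
    linarith

lemma main_bound : ∀ n : ℕ, 0 < n → 2 * Sq n + Bq n ≤ n := by
  intro n
  induction n using Nat.strong_induction_on with
  | _ n ih =>
    intro hn
    rcases Nat.lt_or_ge n 2 with h | h
    · have hn1 : n = 1 := by omega
      subst hn1
      have hS : Sq 1 = 0 := by simp [Sq, Nat.log_one_right]
      have hc : cI 1 = 0 := by simp [cI, Nat.log_one_right]
      have hB : Bq 1 = 1 := by simp [Bq, hc]
      rw [hS, hB]; norm_num
    · rcases Nat.even_or_odd n with ⟨m, hm⟩ | ⟨m, hm⟩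
      · have hm2 : n = 2*m := by omega
        have hmpos : 0 < m := by omega
        have hIH := ih m (by omega) hmpos
        subst hm2
        rw [Sq_even m hmpos]
        have hB : Bq (2*m) ≤ 2 * Bq m := by
          unfold Bq
          rw [cI_even m hmpos]
          exact B_even (cI m)
        push_cast
        linarith [hIH, hB]
      · have hmpos : 0 < m := by omega
        have hIH := ih m (by omega) hmpos
        subst hm
        have hS := Sq_odd m hmpos
        have hB : Bq (2*m+1) = max ((2:ℚ)^(cI m - 1)) 1 := by
          unfold Bq
          rw [cI_odd m hmpos]
        have hBo := B_odd (cI m)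
        unfold Bq at hIH
        rw [hB]
        push_cast
        linarith

theorem F_bounds (n : ℕ) (hn : 0 < n) :
    0 ≤ ∑ k ∈ Finset.Icc 1 (Nat.log 2 n), (2 : ℚ) ^ k * Zigzag ((n : ℚ) / 2 ^ k) ∧
    ∑ k ∈ Finset.Icc 1 (Nat.log 2 n), (2 : ℚ) ^ k * Zigzag ((n : ℚ) / 2 ^ k)
      ≤ ((n : ℚ) - 1) / 2 := by
  have hsum : ∑ k ∈ Finset.Icc 1 (Nat.log 2 n), (2 : ℚ) ^ k * Zigzag ((n : ℚ) / 2 ^ k)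
      = Sq n := by
    rw [← Finset.Ico_add_one_right_eq_Icc, Finset.sum_Ico_eq_sum_range]
    unfold Sq
    apply Finset.sum_congr (by norm_num)
    intro i _
    rw [zig_eq, add_comm]
  rw [hsum]
  constructor
  · exact Finset.sum_nonneg fun i _ => Tq_nonneg n (i+1)
  · have h := main_bound n hn
    have hB : (1:ℚ) ≤ Bq n := le_max_right _ _
    linarith
end
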